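/- Consider an OCO with unbounded memory instance (𝒳, ℋ, A, B) with H_1 = Σ_{k=0}^∞ k‖A^k‖ < ∞. Let S ≥ 1 divide T, let f_1, …, f_T : ℋ → ℝ be L-Lipschitz continuous with each f̄_t convex and L̄-Lipschitz continuous, let R : 𝒳 → ℝ be α-strongly convex with |R(x) − R(x̃)| ≤ D for all x, x̃ ∈ 𝒳, and let η > 0. Let the decisions be the mini-batch FTRL iterates with batch size S: for each batch b ∈ {1, …, T/S} with rounds T_b = {(b−1)S+1, …, bS} and batch-averaged functions g_b = (1/S) Σ_{s ∈ T_b} f̄_s, the decision in each round of batch b equals a minimizer over 𝒳 of x ↦ Σ_{b' = 1}^{b−1} g_{b'}(x) + R(x)/η. Then the policy regret satisfies Σ_{t=1}^{T} f_t(h_t) − inf_{x ∈ 𝒳} Σ_{t=1}^{T} f̄_t(x) ≤ S D/η + η T L̄² / α + η T L L̄ H_1 / (S α). -/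

import Mathlib

open Finset

noncomputable def auxPhi {W : Type*} (g : ℕ → W → ℝ) (R : W → ℝ) (η : ℝ) (b : ℕ) (w : W) : ℝ :=
  (∑ b' ∈ Finset.Icc 1 (b-1), g b' w) + R w / η

lemma aux_convexOn_sum' {W : Type*} [NormedAddCommGroup W] [NormedSpace ℝ W]
    {X : Set W} (hX : Convex ℝ X) {ι : Type*} (s : Finset ι) (F : ι → W → ℝ)
    (h : ∀ i ∈ s, ConvexOn ℝ X (F i)) :
    ConvexOn ℝ X (fun w => ∑ i ∈ s, F i w) := by
  classical
  induction s using Finset.induction_on with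
  | empty => simpa using convexOn_const 0 hX
  | @insert a s' hni ih =>
    simp only [Finset.sum_insert hni]
    exact (h a (Finset.mem_insert_self a s')).add
      (ih fun i hi => h i (Finset.mem_insert_of_mem hi))

lemma aux_strongmin' {W : Type*} [NormedAddCommGroup W] [NormedSpace ℝ W]
    {X : Set W} (hX : Convex ℝ X) {Φ : W → ℝ} {μ : ℝ} (hμ : 0 ≤ μ)
    (hsc : ∀ u ∈ X, ∀ v ∈ X, ∀ a c : ℝ, 0 ≤ a → 0 ≤ c → a + c = 1 →
      Φ (a • u + c • v) ≤ a * Φ u + c * Φ v - a * c * (μ / 2 * ‖u - v‖ ^ 2))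
    {z : W} (hz : z ∈ X) (hzmin : ∀ y ∈ X, Φ z ≤ Φ y) :
    ∀ y ∈ X, Φ z + μ / 2 * ‖y - z‖ ^ 2 ≤ Φ y := by
  intro y hy
  have hQ0 : 0 ≤ μ / 2 * ‖y - z‖ ^ 2 := by positivity
  have key : ∀ a : ℝ, 0 < a → a ≤ 1 →
      (1 - a) * (μ / 2 * ‖y - z‖ ^ 2) ≤ Φ y - Φ z := by
    intro a ha ha1
    have hp : a • y + (1 - a) • z ∈ X := hX hy hz ha.le (by linarith) (by ring)
    have h1 := hsc y hy z hz a (1 - a) ha.le (by linarith) (by ring)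
    have h2 := hzmin _ hp
    have h3 : a * ((1 - a) * (μ / 2 * ‖y - z‖ ^ 2)) ≤ a * (Φ y - Φ z) := by nlinarith
    exact le_of_mul_le_mul_left h3 ha
  have hmain : μ / 2 * ‖y - z‖ ^ 2 ≤ Φ y - Φ z := by
    apply le_of_forall_pos_le_add
    intro ε hε
    set Q : ℝ := μ / 2 * ‖y - z‖ ^ 2 with hQ
    set a : ℝ := min 1 (ε / (Q + 1)) with haa
    have ha0 : 0 < a := lt_min one_pos (by positivity)
    have ha1 : a ≤ 1 := min_le_left _ _
    have haQ : a * Q ≤ ε := by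
      have h4 : a ≤ ε / (Q + 1) := min_le_right _ _
      have h5 : a * Q ≤ (ε / (Q + 1)) * Q := mul_le_mul_of_nonneg_right h4 hQ0
      have h6 : (ε / (Q + 1)) * Q ≤ ε := by
        rw [div_mul_eq_mul_div, div_le_iff₀ (by positivity)]
        nlinarith
      linarith
    have := key a ha0 ha1
    nlinarith
  linarith

/-- Abstract FTRL analysis: regret bound and iterate stability. -/
lemma aux_ftrl {W : Type*} [NormedAddCommGroup W] [NormedSpace ℝ W]
    {X : Set W} (hXconvex : Convex ℝ X)
    (g : ℕ → W → ℝ) (N : ℕ) (z : ℕ → W) (R : W → ℝ)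
    (α η K D : ℝ) (hα : 0 < α) (hη : 0 < η) (hK : 0 ≤ K)
    (hR : StrongConvexOn X α R)
    (hD : ∀ a ∈ X, ∀ b ∈ X, |R a - R b| ≤ D)
    (hg : ∀ b, 1 ≤ b → b ≤ N → ConvexOn ℝ X (g b))
    (hglip : ∀ b, 1 ≤ b → b ≤ N → ∀ u ∈ X, ∀ v ∈ X, |g b u - g b v| ≤ K * ‖u - v‖)
    (hz : ∀ b, 1 ≤ b → b ≤ N → z b ∈ X ∧ ∀ y ∈ X, auxPhi g R η b (z b) ≤ auxPhi g R η b y) :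
    (∀ b b', 1 ≤ b' → b' ≤ b → b ≤ N → ‖z b' - z b‖ ≤ (b - b' : ℕ) * (η * K / α)) ∧
    (1 ≤ N → ∀ y ∈ X,
      (∑ b ∈ Finset.Icc 1 N, g b (z b)) - (∑ b ∈ Finset.Icc 1 N, g b y)
        ≤ D / η + N * (η * K ^ 2 / α)) := by
  have hμ : 0 < α / η := by positivity
  have hc0 : 0 ≤ η * K / α := by positivity
  -- Phi recursion
  have hΦsucc : ∀ b, 1 ≤ b → ∀ w, auxPhi g R η (b+1) w = auxPhi g R η b w + g b w := by
    intro b hb w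
    obtain ⟨m, rfl⟩ : ∃ m, b = m + 1 := ⟨b - 1, by omega⟩
    simp only [auxPhi, Nat.add_sub_cancel]
    rw [Finset.sum_Icc_succ_top (by omega)]
    ring
  -- strong convexity of Phi b
  have hΦsc : ∀ b, b ≤ N → ∀ u ∈ X, ∀ v ∈ X, ∀ a c : ℝ, 0 ≤ a → 0 ≤ c → a + c = 1 →
      auxPhi g R η b (a • u + c • v) ≤ a * auxPhi g R η b u + c * auxPhi g R η b v
        - a * c * ((α / η) / 2 * ‖u - v‖ ^ 2) := by
    intro b hbN u hu v hv a c ha hc hac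
    have hGconv : ConvexOn ℝ X (fun w => ∑ b' ∈ Finset.Icc 1 (b-1), g b' w) := by
      refine aux_convexOn_sum' hXconvex _ _ (fun i hi => ?_)
      rw [Finset.mem_Icc] at hi
      exact hg i hi.1 (by omega)
    have h1 := hGconv.2 hu hv ha hc hac
    have h2 := hR.2 hu hv ha hc hac
    simp only [smul_eq_mul] at h1 h2
    have h3 : R (a • u + c • v) / η ≤
        (a * R u + c * R v - a * c * (α / 2 * ‖u - v‖ ^ 2)) / η := by
      have := mul_le_mul_of_nonneg_right h2 (le_of_lt (inv_pos.mpr hη))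
      simpa [div_eq_mul_inv] using this
    have h4 : (a * R u + c * R v - a * c * (α / 2 * ‖u - v‖ ^ 2)) / η
        = a * (R u / η) + c * (R v / η) - a * c * ((α / η) / 2 * ‖u - v‖ ^ 2) := by
      field_simp
    simp only [auxPhi]
    rw [h4] at h3
    linarith
  -- minimizer inequality
  have hΦmin : ∀ b, 1 ≤ b → b ≤ N → ∀ y ∈ X,
      auxPhi g R η b (z b) + (α / η) / 2 * ‖y - z b‖ ^ 2 ≤ auxPhi g R η b y := by
    intro b hb hbN
    exact aux_strongmin' hXconvex hμ.le (hΦsc b hbN) (hz b hb hbN).1 (hz b hb hbN).2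
  -- stability of consecutive iterates
  have hstab : ∀ b, 1 ≤ b → b + 1 ≤ N → ‖z b - z (b+1)‖ ≤ η * K / α := by
    intro b hb hbN
    set r : ℝ := ‖z b - z (b+1)‖ with hr
    have hr0 : 0 ≤ r := norm_nonneg _
    have hzb : z b ∈ X := (hz b hb (by omega)).1
    have hzb1 : z (b+1) ∈ X := (hz (b+1) (by omega) hbN).1
    have e1 := hΦmin b hb (by omega) (z (b+1)) hzb1
    have e2 := hΦmin (b+1) (by omega) hbN (z b) hzb
    rw [hΦsucc b hb (z b), hΦsucc b hb (z (b+1))] at e2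
    have hnorm : ‖z (b+1) - z b‖ = r := by rw [hr, norm_sub_rev]
    rw [hnorm] at e1
    have e3 : (α / η) * r ^ 2 ≤ g b (z b) - g b (z (b+1)) := by nlinarith
    have e4 : g b (z b) - g b (z (b+1)) ≤ K * r := by
      have := hglip b hb (by omega) (z b) hzb (z (b+1)) hzb1
      rw [← hr] at this
      exact (abs_le.mp this).2
    rcases eq_or_lt_of_le hr0 with h0 | hpos
    · rw [← h0]; positivity
    · have e5 : (α / η) * r ≤ K := by
        have e6 : ((α / η) * r) * r ≤ K * r := by nlinarith
        exact le_of_mul_le_mul_right e6 hpos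
      have e7 : r ≤ K / (α / η) := (le_div_iff₀ hμ).mpr (by linarith [mul_comm r (α / η)])
      calc r ≤ K / (α / η) := e7
        _ = η * K / α := by field_simp
  -- chained stability
  have hchain : ∀ d b, 1 ≤ b → b + d ≤ N → ‖z b - z (b + d)‖ ≤ (d : ℝ) * (η * K / α) := by
    intro d
    induction d with
    | zero => intro b _ _; simp
    | succ m ih =>
      intro b hb hbN
      have h1 := ih b hb (by omega)
      have h2 := hstab (b + m) (by omega) (by omega)
      calc ‖z b - z (b + (m+1))‖
          ≤ ‖z b - z (b + m)‖ + ‖z (b + m) - z (b + m + 1)‖ := by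
            have := norm_sub_le_norm_sub_add_norm_sub (z b) (z (b+m)) (z (b+m+1))
            simpa [← add_assoc] using this
        _ ≤ (m : ℝ) * (η * K / α) + η * K / α := add_le_add h1 h2
        _ = ((m + 1 : ℕ) : ℝ) * (η * K / α) := by push_cast; ring
  constructor
  · intro b b' hb' hb'b hbN
    have := hchain (b - b') b' hb' (by omega)
    rwa [Nat.add_sub_cancel' hb'b] at this
  · -- regret bound
    intro hN y hy
    obtain ⟨M, rfl⟩ : ∃ M, N = M + 1 := ⟨N - 1, by omega⟩
    have hbtl : ∀ m, m + 1 ≤ M + 1 →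
        R (z 1) / η + ∑ b ∈ Finset.Icc 1 m, g b (z (b+1)) ≤ auxPhi g R η (m+1) (z (m+1)) := by
      intro m
      induction m with
      | zero => intro _; simp [auxPhi]
      | succ n ih =>
        intro hm
        have h1 := ih (by omega)
        have h2 : auxPhi g R η (n+1) (z (n+1)) ≤ auxPhi g R η (n+1) (z (n+2)) :=
          (hz (n+1) (by omega) (by omega)).2 (z (n+2)) (hz (n+2) (by omega) (by omega)).1
        rw [Finset.sum_Icc_succ_top (by omega)]
        rw [hΦsucc (n+1) (by omega) (z (n+2))]
        linarith
    have hz1 : z 1 ∈ X := (hz 1 le_rfl (by omega)).1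
    have hzN : z (M+1) ∈ X := (hz (M+1) (by omega) le_rfl).1
    have hsa : ∑ b ∈ Finset.Icc 1 M, g b (z b)
        ≤ (∑ b ∈ Finset.Icc 1 M, g b (z (b+1))) + M * (η * K ^ 2 / α) := by
      have hterm : ∀ b ∈ Finset.Icc 1 M, g b (z b) ≤ g b (z (b+1)) + η * K ^ 2 / α := by
        intro b hb
        rw [Finset.mem_Icc] at hb
        have hzb : z b ∈ X := (hz b hb.1 (by omega)).1
        have hzb1 : z (b+1) ∈ X := (hz (b+1) (by omega) (by omega)).1
        have h1 := (abs_le.mp (hglip b hb.1 (by omega) (z b) hzb (z (b+1)) hzb1)).2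
        have h2 := hstab b hb.1 (by omega)
        have h3 : K * ‖z b - z (b+1)‖ ≤ K * (η * K / α) := mul_le_mul_of_nonneg_left h2 hK
        have h4 : K * (η * K / α) = η * K ^ 2 / α := by ring
        linarith
      calc ∑ b ∈ Finset.Icc 1 M, g b (z b)
          ≤ ∑ b ∈ Finset.Icc 1 M, (g b (z (b+1)) + η * K ^ 2 / α) := Finset.sum_le_sum hterm
        _ = (∑ b ∈ Finset.Icc 1 M, g b (z (b+1))) + M * (η * K ^ 2 / α) := by
            rw [Finset.sum_add_distrib, Finset.sum_const, Nat.card_Icc]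
            simp
    have hsc2 : auxPhi g R η (M+1) (z (M+1)) + g (M+1) (z (M+1))
        ≤ auxPhi g R η (M+1) y + g (M+1) y + η * K ^ 2 / (2 * α) := by
      set r : ℝ := ‖y - z (M+1)‖ with hr
      have h1 := hΦmin (M+1) (by omega) le_rfl y hy
      have h2 : g (M+1) (z (M+1)) - g (M+1) y ≤ K * r := by
        have h5 := (abs_le.mp (hglip (M+1) (by omega) le_rfl (z (M+1)) hzN y hy)).2
        rw [show ‖z (M+1) - y‖ = r by rw [hr, norm_sub_rev]] at h5
        exact h5
      have h3 : K * r - (α / η) / 2 * r ^ 2 ≤ η * K ^ 2 / (2 * α) := by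
        have hpos : (0:ℝ) < 2 * α * η := by positivity
        apply le_of_mul_le_mul_right ?_ hpos
        have ea : (K * r - α / η / 2 * r ^ 2) * (2 * α * η) = 2*α*η*K*r - α^2*r^2 := by
          field_simp
        have eb : η * K ^ 2 / (2 * α) * (2 * α * η) = η^2 * K^2 := by
          field_simp
        rw [ea, eb]
        nlinarith [sq_nonneg (η * K - α * r)]
      linarith
    have e1 : ∑ b ∈ Finset.Icc 1 (M+1), g b (z b)
        = (∑ b ∈ Finset.Icc 1 M, g b (z b)) + g (M+1) (z (M+1)) :=
      Finset.sum_Icc_succ_top (by omega) _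
    have e2 : ∑ b ∈ Finset.Icc 1 (M+1), g b y
        = (∑ b ∈ Finset.Icc 1 M, g b y) + g (M+1) y :=
      Finset.sum_Icc_succ_top (by omega) _
    have e3 : auxPhi g R η (M+1) y = (∑ b ∈ Finset.Icc 1 M, g b y) + R y / η := by
      simp [auxPhi]
    have e4 := hbtl M (by omega)
    have e5 : (R y - R (z 1)) / η ≤ D / η := by
      gcongr
      exact (abs_le.mp (hD y hy (z 1) hz1)).2
    have hK2 : 0 ≤ η * K ^ 2 / α := by positivity
    have e6 : η * K ^ 2 / (2 * α) ≤ η * K ^ 2 / α := by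
      apply div_le_div_of_nonneg_left (by positivity) hα (by linarith)
    rw [e1, e2]
    have efin : (R y - R (z 1)) / η = R y / η - R (z 1) / η := by ring
    push_cast
    linarith

lemma aux_batchsum {M : Type*} [AddCommMonoid M] (F : ℕ → M) (S : ℕ) :
    ∀ N : ℕ, ∑ t ∈ Finset.Ioc 0 (N*S), F t
      = ∑ b ∈ Finset.Icc 1 N, ∑ s ∈ Finset.Ioc ((b-1)*S) (b*S), F s := by
  intro N
  induction N with
  | zero => simp
  | succ n ih =>
    rw [Finset.sum_Icc_succ_top (by omega), ← ih, Nat.add_sub_cancel]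
    exact (Finset.sum_Ioc_consecutive F (Nat.zero_le (n*S))
      (Nat.mul_le_mul_right S (by omega))).symm

/-- regret bound for mini-batch FTRL with unbounded memory.  For an OCO with
unbounded memory instance with `H₁ = ∑ₖ k‖Aᵏ‖ < ∞`, batch size `S ≥ 1` dividing `T`,
`L`-Lipschitz losses whose unary forms `f̄_t` are convex and `L̄`-Lipschitz on `𝒳`, an
`α`-strongly convex regularizer with oscillation at most `D`, and mini-batch FTRL decisions
(constant within each batch, with the batch-leader minimizing the batch-averaged objective),
the policy regret is at most `S D/η + η T L̄²/α + η T L L̄ H₁/(S α)`. -/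
theorem stmt_18
    {W : Type*} [NormedAddCommGroup W] [InnerProductSpace ℝ W] [CompleteSpace W]
    {H : Type*} [NormedAddCommGroup H] [NormedSpace ℝ H] [CompleteSpace H]
    (X : Set W) (hXne : X.Nonempty) (hXclosed : IsClosed X) (hXconvex : Convex ℝ X)
    (A : H →L[ℝ] H) (B : W →L[ℝ] H) (hB : ‖B‖ ≤ 1)
    (hH1 : Summable fun k : ℕ => (k : ℝ) * ‖A ^ k‖)
    (S T : ℕ) (hS : 1 ≤ S) (hST : S ∣ T)
    (f : ℕ → H → ℝ) (L Lbar : ℝ) (hL : 0 ≤ L) (hLbar : 0 ≤ Lbar)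
    (hf : ∀ t, 1 ≤ t → t ≤ T → ∀ a b : H, |f t a - f t b| ≤ L * ‖a - b‖)
    (hconv : ∀ t, 1 ≤ t → t ≤ T →
      ConvexOn ℝ X (fun x : W => f t (∑ k ∈ Finset.range t, (A ^ k) (B x))))
    (hlipbar : ∀ t, 1 ≤ t → t ≤ T → ∀ a ∈ X, ∀ b ∈ X,
      |f t (∑ k ∈ Finset.range t, (A ^ k) (B a)) - f t (∑ k ∈ Finset.range t, (A ^ k) (B b))|
        ≤ Lbar * ‖a - b‖)
    (R : W → ℝ) (α : ℝ) (hα : 0 < α) (hR : StrongConvexOn X α R)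
    (D : ℝ) (hD : ∀ a ∈ X, ∀ b ∈ X, |R a - R b| ≤ D)
    (η : ℝ) (hη : 0 < η)
    (x : ℕ → W)
    -- the decision is constant within each batch
    (hconst : ∀ t, 1 ≤ t → t ≤ T → x t = x ((t - 1) / S * S + 1))
    -- the decision at the start of batch `b` minimizes the mini-batch FTRL objective
    (hmin : ∀ b, 1 ≤ b → b ≤ T / S → x ((b - 1) * S + 1) ∈ X ∧
      ∀ y ∈ X,
        (∑ b' ∈ Finset.Icc 1 (b - 1), (S : ℝ)⁻¹ *
            ∑ s ∈ Finset.Icc ((b' - 1) * S + 1) (b' * S),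
              f s (∑ k ∈ Finset.range s, (A ^ k) (B (x ((b - 1) * S + 1)))))
            + R (x ((b - 1) * S + 1)) / η
          ≤ (∑ b' ∈ Finset.Icc 1 (b - 1), (S : ℝ)⁻¹ *
              ∑ s ∈ Finset.Icc ((b' - 1) * S + 1) (b' * S),
                f s (∑ k ∈ Finset.range s, (A ^ k) (B y)))
            + R y / η)
    (h : ℕ → H) (hh0 : h 0 = 0) (hh : ∀ t : ℕ, h (t + 1) = A (h t) + B (x (t + 1))) :
    ∀ y ∈ X,
      (∑ t ∈ Finset.Icc 1 T, f t (h t))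
          - (∑ t ∈ Finset.Icc 1 T, f t (∑ k ∈ Finset.range t, (A ^ k) (B y)))
        ≤ S * D / η + η * T * Lbar ^ 2 / α
            + η * T * L * Lbar * (∑' k : ℕ, (k : ℝ) * ‖A ^ k‖) / (S * α) := by
  intro y hy
  obtain ⟨x0, hx0⟩ := hXne
  have hD0 : 0 ≤ D := by simpa using hD x0 hx0 x0 hx0
  have htsum0 : 0 ≤ ∑' k : ℕ, (k : ℝ) * ‖A ^ k‖ :=
    tsum_nonneg (fun k => by positivity)
  by_cases hT0 : T = 0
  · subst hT0
    simp only [Nat.cast_zero]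
    have h0 : Finset.Icc 1 0 = (∅ : Finset ℕ) := by simp
    rw [h0]
    simp only [Finset.sum_empty, sub_zero, sub_self]
    have : (0:ℝ) ≤ S * D / η := by positivity
    have h2 : η * 0 * Lbar ^ 2 / α = 0 := by ring
    have h3 : η * 0 * L * Lbar * (∑' k : ℕ, (k : ℝ) * ‖A ^ k‖) / (S * α) = 0 := by ring
    rw [h2, h3]
    linarith
  have hT1 : 1 ≤ T := by omega
  set N := T / S with hNdef
  have hTN : N * S = T := Nat.div_mul_cancel hST
  have hN1 : 1 ≤ N := by
    have hSle : S ≤ T := Nat.le_of_dvd (by omega) hST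
    exact (Nat.one_le_div_iff (by omega)).mpr hSle
  set c : ℝ := η * Lbar / α with hcdef
  have hc0 : 0 ≤ c := by rw [hcdef]; positivity
  -- the FTRL machinery
  have hftrl := aux_ftrl (X := X) hXconvex
    (fun b w => (S : ℝ)⁻¹ * ∑ s ∈ Finset.Ioc ((b-1)*S) (b*S),
      f s (∑ k ∈ Finset.range s, (A ^ k) (B w)))
    N (fun b => x ((b-1)*S + 1)) R α η Lbar D hα hη hLbar hR hD
    ?hg ?hglip ?hz
  case hg =>
    intro b hb hbN
    have hsum := aux_convexOn_sum' hXconvex (Finset.Ioc ((b-1)*S) (b*S))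
      (fun s w => f s (∑ k ∈ Finset.range s, (A ^ k) (B w))) ?_
    · simpa [smul_eq_mul] using hsum.smul (by positivity : (0:ℝ) ≤ (S:ℝ)⁻¹)
    · intro s hs
      rw [Finset.mem_Ioc] at hs
      have hbS : b * S ≤ N * S := Nat.mul_le_mul_right S hbN
      exact hconv s (by omega) (by omega)
  case hglip =>
    intro b hb hbN u hu v hv
    have hcard : (Finset.Ioc ((b-1)*S) (b*S)).card = S := by
      rw [Nat.card_Ioc]
      obtain ⟨m, rfl⟩ : ∃ m, b = m + 1 := ⟨b - 1, by omega⟩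
      simp [Nat.succ_mul]
    have hmemTs : ∀ s ∈ Finset.Ioc ((b-1)*S) (b*S), 1 ≤ s ∧ s ≤ T := by
      intro s hs
      rw [Finset.mem_Ioc] at hs
      have hbS : b * S ≤ N * S := Nat.mul_le_mul_right S hbN
      omega
    have hS0 : ((S:ℝ))⁻¹ * (S:ℝ) = 1 := by
      rw [inv_mul_cancel₀]; positivity
    calc |(S : ℝ)⁻¹ * ∑ s ∈ Finset.Ioc ((b-1)*S) (b*S),
            f s (∑ k ∈ Finset.range s, (A ^ k) (B u))
          - (S : ℝ)⁻¹ * ∑ s ∈ Finset.Ioc ((b-1)*S) (b*S),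
            f s (∑ k ∈ Finset.range s, (A ^ k) (B v))|
        = (S : ℝ)⁻¹ * |∑ s ∈ Finset.Ioc ((b-1)*S) (b*S),
            (f s (∑ k ∈ Finset.range s, (A ^ k) (B u))
              - f s (∑ k ∈ Finset.range s, (A ^ k) (B v)))| := by
          rw [← mul_sub, abs_mul, abs_of_nonneg (by positivity), Finset.sum_sub_distrib]
      _ ≤ (S : ℝ)⁻¹ * ∑ s ∈ Finset.Ioc ((b-1)*S) (b*S),
            |f s (∑ k ∈ Finset.range s, (A ^ k) (B u))
              - f s (∑ k ∈ Finset.range s, (A ^ k) (B v))| := by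
          exact mul_le_mul_of_nonneg_left (Finset.abs_sum_le_sum_abs _ _) (by positivity)
      _ ≤ (S : ℝ)⁻¹ * ∑ s ∈ Finset.Ioc ((b-1)*S) (b*S), Lbar * ‖u - v‖ := by
          refine mul_le_mul_of_nonneg_left (Finset.sum_le_sum fun s hs => ?_) (by positivity)
          exact hlipbar s (hmemTs s hs).1 (hmemTs s hs).2 u hu v hv
      _ = Lbar * ‖u - v‖ := by
          rw [Finset.sum_const, hcard, nsmul_eq_mul, ← mul_assoc, hS0, one_mul]
  case hz =>
    intro b hb hbN
    obtain ⟨hmem, hineq⟩ := hmin b hb hbN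
    refine ⟨hmem, fun y' hy' => ?_⟩
    have := hineq y' hy'
    simp only [auxPhi]
    simpa only [Finset.Icc_add_one_left_eq_Ioc] using this
  obtain ⟨hchain, hregret⟩ := hftrl
  have hreg := hregret hN1 y hy
  -- batch decomposition of sums over rounds
  have hIT : Finset.Icc 1 T = Finset.Ioc 0 T := Finset.Icc_add_one_left_eq_Ioc 0 T
  have hbatch : ∀ G : ℕ → ℝ, ∑ t ∈ Finset.Icc 1 T, G t
      = ∑ b ∈ Finset.Icc 1 N, ∑ s ∈ Finset.Ioc ((b-1)*S) (b*S), G s := by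
    intro G
    rw [hIT, ← hTN]
    exact aux_batchsum G S N
  -- within a batch the decision is the batch leader
  have hbmem : ∀ b, 1 ≤ b → b ≤ N → ∀ s ∈ Finset.Ioc ((b-1)*S) (b*S),
      x s = x ((b-1)*S + 1) := by
    intro b hb hbN s hs
    rw [Finset.mem_Ioc] at hs
    have hbS : b * S ≤ N * S := Nat.mul_le_mul_right S hbN
    have h1 : 1 ≤ s := by omega
    have h2 : s ≤ T := by omega
    have h3 : (s-1)/S = b-1 := by
      apply Nat.div_eq_of_lt_le
      · omega
      · have hb' : (b-1+1) = b := by omega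
        rw [hb']
        omega
    rw [hconst s h1 h2, h3]
  -- the FTRL (batch) part of the regret
  have hcastT : (N : ℝ) * (S : ℝ) = (T : ℝ) := by exact_mod_cast congrArg Nat.cast hTN
  have hsum2 : (∑ t ∈ Finset.Icc 1 T, f t (∑ k ∈ Finset.range t, (A ^ k) (B (x t))))
      - (∑ t ∈ Finset.Icc 1 T, f t (∑ k ∈ Finset.range t, (A ^ k) (B y)))
      ≤ S * D / η + η * T * Lbar ^ 2 / α := by
    have e1 : ∑ t ∈ Finset.Icc 1 T, f t (∑ k ∈ Finset.range t, (A ^ k) (B (x t)))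
        = (S : ℝ) * ∑ b ∈ Finset.Icc 1 N, ((S : ℝ)⁻¹ *
            ∑ s ∈ Finset.Ioc ((b-1)*S) (b*S),
              f s (∑ k ∈ Finset.range s, (A ^ k) (B (x ((b-1)*S + 1))))) := by
      rw [hbatch (fun t => f t (∑ k ∈ Finset.range t, (A ^ k) (B (x t)))), Finset.mul_sum]
      refine Finset.sum_congr rfl fun b hb => ?_
      rw [Finset.mem_Icc] at hb
      rw [← mul_assoc, mul_inv_cancel₀ (by positivity), one_mul]
      exact Finset.sum_congr rfl fun s hs => by rw [hbmem b hb.1 hb.2 s hs]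
    have e2 : ∑ t ∈ Finset.Icc 1 T, f t (∑ k ∈ Finset.range t, (A ^ k) (B y))
        = (S : ℝ) * ∑ b ∈ Finset.Icc 1 N, ((S : ℝ)⁻¹ *
            ∑ s ∈ Finset.Ioc ((b-1)*S) (b*S),
              f s (∑ k ∈ Finset.range s, (A ^ k) (B y))) := by
      rw [hbatch (fun t => f t (∑ k ∈ Finset.range t, (A ^ k) (B y))), Finset.mul_sum]
      refine Finset.sum_congr rfl fun b hb => ?_
      rw [← mul_assoc, mul_inv_cancel₀ (by positivity), one_mul]
    rw [e1, e2, ← mul_sub]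
    have e3 := mul_le_mul_of_nonneg_left hreg (show (0:ℝ) ≤ (S:ℝ) by positivity)
    have e4 : (S:ℝ) * (D / η + N * (η * Lbar ^ 2 / α)) = S * D / η + η * T * Lbar ^ 2 / α := by
      rw [← hcastT]; ring
    linarith
  -- explicit formula for the history
  have hist : ∀ t, h t = ∑ k ∈ Finset.range t, (A ^ k) (B (x (t - k))) := by
    intro t
    induction t with
    | zero => simpa using hh0
    | succ n ih =>
      rw [hh n, ih, Finset.sum_range_succ' (fun k => (A ^ k) (B (x (n + 1 - k)))) n]
      rw [map_sum]
      simp only [pow_zero, ContinuousLinearMap.one_apply, Nat.sub_zero]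
      congr 1
      refine Finset.sum_congr rfl fun k hk => ?_
      rw [Finset.mem_range] at hk
      have e : n + 1 - (k + 1) = n - k := by omega
      rw [e, pow_succ']
      rfl
  -- per-round memory error bound
  have hTSN : S * N = T := by rw [mul_comm]; exact hTN
  have hmem : ∀ t, 1 ≤ t → t ≤ T →
      f t (h t) - f t (∑ k ∈ Finset.range t, (A ^ k) (B (x t)))
        ≤ L * ∑ k ∈ Finset.range t,
            ‖A ^ k‖ * (((t-1)/S - (t-1-k)/S : ℕ) : ℝ) * (η * Lbar / α) := by
    intro t h1 h2
    have hfb := (abs_le.mp (hf t h1 h2 (h t)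
      (∑ k ∈ Finset.range t, (A ^ k) (B (x t))))).2
    have hnorm : ‖h t - ∑ k ∈ Finset.range t, (A ^ k) (B (x t))‖
        ≤ ∑ k ∈ Finset.range t,
            ‖A ^ k‖ * (((t-1)/S - (t-1-k)/S : ℕ) : ℝ) * (η * Lbar / α) := by
      rw [hist t, ← Finset.sum_sub_distrib]
      refine le_trans (norm_sum_le _ _) (Finset.sum_le_sum fun k hk => ?_)
      rw [Finset.mem_range] at hk
      have e0 : (A ^ k) (B (x (t-k))) - (A ^ k) (B (x t))
          = (A ^ k) (B (x (t-k) - x t)) := by rw [map_sub, map_sub]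
      rw [e0]
      have e1 : ‖(A ^ k) (B (x (t-k) - x t))‖ ≤ ‖A ^ k‖ * ‖x (t-k) - x t‖ := by
        calc ‖(A ^ k) (B (x (t-k) - x t))‖
            ≤ ‖A ^ k‖ * ‖B (x (t-k) - x t)‖ := ContinuousLinearMap.le_opNorm _ _
          _ ≤ ‖A ^ k‖ * (‖B‖ * ‖x (t-k) - x t‖) := by
              gcongr
              exact ContinuousLinearMap.le_opNorm _ _
          _ ≤ ‖A ^ k‖ * (1 * ‖x (t-k) - x t‖) := by gcongr
          _ = ‖A ^ k‖ * ‖x (t-k) - x t‖ := by ring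
      have hbtN : (t-1)/S + 1 ≤ N := by
        have hlt : t - 1 < S * N := by rw [hTSN]; omega
        exact Nat.succ_le_of_lt (Nat.div_lt_of_lt_mul hlt)
      have hdle : (t-1-k)/S ≤ (t-1)/S := Nat.div_le_div_right (by omega)
      have h5 := hchain ((t-1)/S + 1) ((t-1-k)/S + 1)
        (Nat.succ_le_succ (Nat.zero_le _)) (Nat.succ_le_succ hdle) hbtN
      simp only [Nat.add_sub_cancel] at h5
      have hxt : x t = x ((t-1)/S * S + 1) := hconst t h1 h2
      have hxtk : x (t-k) = x ((t-1-k)/S * S + 1) := by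
        have h6 := hconst (t-k) (by omega) (by omega)
        rw [show t - k - 1 = t - 1 - k from by omega] at h6
        exact h6
      have h7 : ((t-1)/S + 1 - ((t-1-k)/S + 1)) = ((t-1)/S - (t-1-k)/S) :=
        Nat.succ_sub_succ _ _
      rw [h7] at h5
      calc ‖(A ^ k) (B (x (t-k) - x t))‖
          ≤ ‖A ^ k‖ * ‖x (t-k) - x t‖ := e1
        _ ≤ ‖A ^ k‖ * ((((t-1)/S - (t-1-k)/S : ℕ) : ℝ) * (η * Lbar / α)) := by
            rw [hxt, hxtk]
            exact mul_le_mul_of_nonneg_left h5 (norm_nonneg _)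
        _ = ‖A ^ k‖ * (((t-1)/S - (t-1-k)/S : ℕ) : ℝ) * (η * Lbar / α) := by ring
    have := mul_le_mul_of_nonneg_left hnorm hL
    linarith
  -- summed memory bound
  have hmemsum : (∑ t ∈ Finset.Icc 1 T, f t (h t))
      - (∑ t ∈ Finset.Icc 1 T, f t (∑ k ∈ Finset.range t, (A ^ k) (B (x t))))
      ≤ η * T * L * Lbar * (∑' k : ℕ, (k : ℝ) * ‖A ^ k‖) / (S * α) := by
    have step1 : (∑ t ∈ Finset.Icc 1 T, f t (h t))
        - (∑ t ∈ Finset.Icc 1 T, f t (∑ k ∈ Finset.range t, (A ^ k) (B (x t))))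
        ≤ L * ∑ t ∈ Finset.Icc 1 T, ∑ k ∈ Finset.range t,
            ‖A ^ k‖ * (((t-1)/S - (t-1-k)/S : ℕ) : ℝ) * (η * Lbar / α) := by
      rw [← Finset.sum_sub_distrib, Finset.mul_sum]
      refine Finset.sum_le_sum fun t ht => ?_
      rw [Finset.mem_Icc] at ht
      exact hmem t ht.1 ht.2
    have hswap : ∑ t ∈ Finset.Icc 1 T, ∑ k ∈ Finset.range t,
          ‖A ^ k‖ * (((t-1)/S - (t-1-k)/S : ℕ) : ℝ) * (η * Lbar / α)
        = ∑ k ∈ Finset.range T, ∑ t ∈ Finset.Ioc k T,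
          ‖A ^ k‖ * (((t-1)/S - (t-1-k)/S : ℕ) : ℝ) * (η * Lbar / α) := by
      refine Finset.sum_comm' ?_
      intro t k
      simp only [Finset.mem_Icc, Finset.mem_range, Finset.mem_Ioc]
      omega
    have hinner : ∀ k ∈ Finset.range T,
        ∑ t ∈ Finset.Ioc k T, (((t-1)/S - (t-1-k)/S : ℕ) : ℝ) ≤ (k:ℝ) * T / S := by
      intro k hk
      rw [Finset.mem_range] at hk
      have hcast : ∀ t ∈ Finset.Ioc k T, (((t-1)/S - (t-1-k)/S : ℕ) : ℝ)
          = (((t-1)/S : ℕ) : ℝ) - (((t-1-k)/S : ℕ) : ℝ) := by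
        intro t ht
        exact_mod_cast Nat.cast_sub (Nat.div_le_div_right (by omega))
      rw [Finset.sum_congr rfl hcast, Finset.sum_sub_distrib]
      have hre : ∑ t ∈ Finset.Ioc k T, (((t-1-k)/S : ℕ) : ℝ)
          = ∑ j ∈ Finset.Ioc 0 (T-k), (((j-1)/S : ℕ) : ℝ) := by
        have hmap : Finset.Ioc k T = Finset.map (addLeftEmbedding k) (Finset.Ioc 0 (T-k)) := by
          rw [Finset.map_add_left_Ioc]
          congr 1 <;> omega
        rw [hmap, Finset.sum_map]
        refine Finset.sum_congr rfl fun j hj => ?_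
        rw [Finset.mem_Ioc] at hj
        simp only [addLeftEmbedding_apply]
        congr 2
        omega
      rw [hre]
      have hsplit1 := Finset.sum_Ioc_consecutive (fun t => (((t-1)/S : ℕ) : ℝ))
        (Nat.zero_le k) (le_of_lt hk)
      have hsplit2 := Finset.sum_Ioc_consecutive (fun t => (((t-1)/S : ℕ) : ℝ))
        (Nat.zero_le (T-k)) (Nat.sub_le T k)
      have htail : ∑ t ∈ Finset.Ioc (T-k) T, (((t-1)/S : ℕ) : ℝ) ≤ (k:ℝ) * ((T:ℝ)/S) := by
        have hcard : (Finset.Ioc (T-k) T).card = k := by rw [Nat.card_Ioc]; omega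
        calc ∑ t ∈ Finset.Ioc (T-k) T, (((t-1)/S : ℕ) : ℝ)
            ≤ ∑ t ∈ Finset.Ioc (T-k) T, (T:ℝ)/(S:ℝ) := by
              refine Finset.sum_le_sum fun t ht => ?_
              rw [Finset.mem_Ioc] at ht
              calc (((t-1)/S : ℕ) : ℝ) ≤ ((t-1 : ℕ):ℝ)/(S:ℝ) := Nat.cast_div_le
                _ ≤ (T:ℝ)/(S:ℝ) := by
                    gcongr
                    exact_mod_cast (by omega : t - 1 ≤ T)
          _ = (k:ℝ) * ((T:ℝ)/S) := by rw [Finset.sum_const, hcard, nsmul_eq_mul]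
      have hhead : 0 ≤ ∑ t ∈ Finset.Ioc 0 k, (((t-1)/S : ℕ) : ℝ) :=
        Finset.sum_nonneg fun t _ => by positivity
      have heq : (k:ℝ) * ((T:ℝ)/S) = (k:ℝ) * T / S := by ring
      linarith
    have hfact : ∀ k ∈ Finset.range T, ∑ t ∈ Finset.Ioc k T,
        ‖A ^ k‖ * (((t-1)/S - (t-1-k)/S : ℕ) : ℝ) * (η * Lbar / α)
        ≤ (η * Lbar / α * ((T:ℝ)/S)) * ((k:ℝ) * ‖A ^ k‖) := by
      intro k hk
      calc ∑ t ∈ Finset.Ioc k T,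
            ‖A ^ k‖ * (((t-1)/S - (t-1-k)/S : ℕ) : ℝ) * (η * Lbar / α)
          = (‖A ^ k‖ * (η * Lbar / α)) * ∑ t ∈ Finset.Ioc k T,
              (((t-1)/S - (t-1-k)/S : ℕ) : ℝ) := by
            rw [Finset.mul_sum]
            exact Finset.sum_congr rfl fun t _ => by ring
        _ ≤ (‖A ^ k‖ * (η * Lbar / α)) * ((k:ℝ) * T / S) :=
            mul_le_mul_of_nonneg_left (hinner k hk) (by positivity)
        _ = (η * Lbar / α * ((T:ℝ)/S)) * ((k:ℝ) * ‖A ^ k‖) := by ring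
    have hts : ∑ k ∈ Finset.range T, (k:ℝ) * ‖A ^ k‖ ≤ ∑' k : ℕ, (k:ℝ) * ‖A ^ k‖ :=
      hH1.sum_le_tsum _ (fun i _ => by positivity)
    have hcoef : (0:ℝ) ≤ η * Lbar / α * ((T:ℝ)/S) := by positivity
    calc (∑ t ∈ Finset.Icc 1 T, f t (h t))
        - (∑ t ∈ Finset.Icc 1 T, f t (∑ k ∈ Finset.range t, (A ^ k) (B (x t))))
        ≤ L * ∑ t ∈ Finset.Icc 1 T, ∑ k ∈ Finset.range t,
            ‖A ^ k‖ * (((t-1)/S - (t-1-k)/S : ℕ) : ℝ) * (η * Lbar / α) := step1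
      _ = L * ∑ k ∈ Finset.range T, ∑ t ∈ Finset.Ioc k T,
            ‖A ^ k‖ * (((t-1)/S - (t-1-k)/S : ℕ) : ℝ) * (η * Lbar / α) := by rw [hswap]
      _ ≤ L * ∑ k ∈ Finset.range T, (η * Lbar / α * ((T:ℝ)/S)) * ((k:ℝ) * ‖A ^ k‖) :=
          mul_le_mul_of_nonneg_left (Finset.sum_le_sum hfact) hL
      _ = L * ((η * Lbar / α * ((T:ℝ)/S)) * ∑ k ∈ Finset.range T, (k:ℝ) * ‖A ^ k‖) := by
          rw [← Finset.mul_sum]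
      _ ≤ L * ((η * Lbar / α * ((T:ℝ)/S)) * ∑' k : ℕ, (k:ℝ) * ‖A ^ k‖) :=
          mul_le_mul_of_nonneg_left (mul_le_mul_of_nonneg_left hts hcoef) hL
      _ = η * T * L * Lbar * (∑' k : ℕ, (k:ℝ) * ‖A ^ k‖) / (S * α) := by ring
  linarith
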